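/- Let G be a connected simple graph with n vertices whose set T of pendant vertices (vertices of degree one) is nonempty, is a proper subset of V(G), and has cardinality n₁. Then S_L(G) ≥ n₁/(n − n₁). -/

import Mathlib

open Finset Polynomial Matrix

section aux

lemma charpoly_eq_prod_eigs {n : ℕ} (A : Matrix (Fin n) (Fin n) ℝ) (hA : A.IsHermitian) :
    A.charpoly = ∏ i, (X - C (hA.eigenvalues i)) := by
  set U : Matrix (Fin n) (Fin n) ℝ := ↑hA.eigenvectorUnitary with hUdef
  have hUU : U * star U = 1 := (Matrix.mem_unitaryGroup_iff).mp hA.eigenvectorUnitary.2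
  have hspec : A = U * Matrix.diagonal hA.eigenvalues * star U := by
    simpa using hA.spectral_theorem
  have h1 : A.charpoly = (Matrix.diagonal hA.eigenvalues).charpoly := by
    unfold Matrix.charpoly charmatrix
    set mc : Matrix (Fin n) (Fin n) ℝ →+* Matrix (Fin n) (Fin n) ℝ[X] := (C : ℝ →+* ℝ[X]).mapMatrix with hmc
    have key : Matrix.scalar (Fin n) (X : ℝ[X]) - mc A
        = mc U * (Matrix.scalar (Fin n) (X : ℝ[X]) - mc (Matrix.diagonal hA.eigenvalues)) * mc (star U) := by
      rw [Matrix.mul_sub, Matrix.sub_mul]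
      congr 1
      · have hc : Commute ((Matrix.scalar (Fin n)) (X : ℝ[X])) (mc U) :=
          Matrix.scalar_commute (X : ℝ[X]) (fun r => Commute.all _ _) (mc U)
        rw [← hc.eq, Matrix.mul_assoc, ← _root_.map_mul mc, hUU, _root_.map_one mc, Matrix.mul_one]
      · rw [congrArg mc hspec, _root_.map_mul mc, _root_.map_mul mc]
    rw [key, Matrix.det_mul, Matrix.det_mul, mul_right_comm, ← Matrix.det_mul (mc U) (mc (star U)),
      ← _root_.map_mul mc, hUU, _root_.map_one mc, Matrix.det_one, one_mul]
  rw [h1]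
  rw [Matrix.charpoly_of_upperTriangular _ (Matrix.blockTriangular_diagonal _)]
  simp

lemma quadform_eq_sum {n : ℕ} {A : Matrix (Fin n) (Fin n) ℝ} (hA : A.IsHermitian) (x : Fin n → ℝ) :
    x ⬝ᵥ (A *ᵥ x) =
    ∑ i, hA.eigenvalues i * ((star (hA.eigenvectorUnitary : Matrix (Fin n) (Fin n) ℝ) *ᵥ x) i)^2 := by
  set U : Matrix (Fin n) (Fin n) ℝ := ↑hA.eigenvectorUnitary with hUdef
  set c : Fin n → ℝ := star U *ᵥ x with hc
  have hspec : A = U * Matrix.diagonal hA.eigenvalues * star U := by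
    simpa using hA.spectral_theorem
  have hsU : star U = Uᵀ := by
    rw [Matrix.star_eq_conjTranspose, Matrix.conjTranspose_eq_transpose_of_trivial]
  conv_lhs => rw [hspec]
  rw [← Matrix.mulVec_mulVec, ← Matrix.mulVec_mulVec, Matrix.dotProduct_mulVec,
    ← Matrix.mulVec_transpose, ← hsU, ← hc]
  simp [dotProduct, Matrix.mulVec_diagonal, sq]
  exact Finset.sum_congr rfl fun i _ => by ring

lemma sum_sq_coords {n : ℕ} {A : Matrix (Fin n) (Fin n) ℝ} (hA : A.IsHermitian) (x : Fin n → ℝ) :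
    ∑ i, ((star (hA.eigenvectorUnitary : Matrix (Fin n) (Fin n) ℝ) *ᵥ x) i)^2
    = x ⬝ᵥ x := by
  set U : Matrix (Fin n) (Fin n) ℝ := ↑hA.eigenvectorUnitary with hUdef
  have hUU : U * star U = 1 := (Matrix.mem_unitaryGroup_iff).mp hA.eigenvectorUnitary.2
  have hsU : star U = Uᵀ := by
    rw [Matrix.star_eq_conjTranspose, Matrix.conjTranspose_eq_transpose_of_trivial]
  have : ∑ i, ((star U *ᵥ x) i)^2 = (star U *ᵥ x) ⬝ᵥ (star U *ᵥ x) := by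
    simp [dotProduct, sq]
  rw [this, Matrix.dotProduct_mulVec, hsU, ← Matrix.mulVec_transpose, Matrix.transpose_transpose,
    Matrix.mulVec_mulVec, ← hsU, hUU, Matrix.one_mulVec]

lemma card_zero_eigs {n : ℕ} (G : SimpleGraph (Fin n)) [DecidableRel G.Adj] (hG : G.Connected)
    (hL : (G.lapMatrix ℝ).IsHermitian) :
    (univ.filter (fun i => hL.eigenvalues i = 0)).card = 1 := by
  classical
  have hker : Module.finrank ℝ (LinearMap.ker (Matrix.toLin' (G.lapMatrix ℝ))) = 1 := by
    rw [← G.card_connectedComponent_eq_finrank_ker_toLin'_lapMatrix]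
    have hs : Subsingleton G.ConnectedComponent := by
      constructor
      intro a b
      induction a using SimpleGraph.ConnectedComponent.ind with | _ v =>
      induction b using SimpleGraph.ConnectedComponent.ind with | _ w =>
      exact SimpleGraph.ConnectedComponent.sound (hG.preconnected v w)
    have hne : Nonempty G.ConnectedComponent := by
      have : Nonempty (Fin n) := hG.nonempty
      exact ⟨G.connectedComponentMk this.some⟩
    have h1 : Fintype.card G.ConnectedComponent ≤ 1 :=
      Fintype.card_le_one_iff_subsingleton.mpr ‹_›
    have h2 : 0 < Fintype.card G.ConnectedComponent := Fintype.card_pos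
    omega
  have htoLin : Matrix.toLin' (G.lapMatrix ℝ) = (G.lapMatrix ℝ).mulVecLin :=
    LinearMap.ext fun v => by rw [Matrix.toLin'_apply, Matrix.mulVecLin_apply]
  have hrank : (G.lapMatrix ℝ).rank + 1 = n := by
    rw [Matrix.rank, ← hker, htoLin]
    have := LinearMap.finrank_range_add_finrank_ker ((G.lapMatrix ℝ).mulVecLin)
    simpa using this
  have hcnz : (univ.filter (fun i => hL.eigenvalues i ≠ 0)).card = (G.lapMatrix ℝ).rank := by
    rw [hL.rank_eq_card_non_zero_eigs, Fintype.card_subtype]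
  have h2 := Finset.card_filter_add_card_filter_not (s := (univ : Finset (Fin n)))
    (p := fun i => hL.eigenvalues i = 0)
  simp only [Finset.card_univ, Fintype.card_fin, ne_eq] at h2 hcnz
  omega

variable {n : ℕ} (G : SimpleGraph (Fin n)) [DecidableRel G.Adj]

lemma unique_nbr {v u w : Fin n} (hd : G.degree v = 1) (hu : G.Adj v u) (hw : G.Adj v w) :
    w = u := by
  obtain ⟨a, ha⟩ := Finset.card_eq_one.mp hd
  have h1 : u ∈ G.neighborFinset v := (G.mem_neighborFinset v u).mpr hu
  have h2 : w ∈ G.neighborFinset v := (G.mem_neighborFinset v w).mpr hw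
  rw [ha, Finset.mem_singleton] at h1 h2
  rw [h1, h2]

lemma no_pendant_adj (hG : G.Connected)
    (hTp : univ.filter (fun v => G.degree v = 1) ≠ univ)
    {v u : Fin n} (hv : G.degree v = 1) (hadj : G.Adj v u) : G.degree u ≠ 1 := by
  intro hu
  obtain ⟨w, hw⟩ : ∃ w, G.degree w ≠ 1 := by
    by_contra h
    push_neg at h
    exact hTp (Finset.eq_univ_iff_forall.mpr (fun x => by simp [h x]))
  have closed : ∀ a c, G.Adj a c → a ∈ ({v, u} : Set (Fin n)) → c ∈ ({v, u} : Set (Fin n)) := by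
    intro a c hac ha
    rcases ha with ha | ha
    · subst ha; right; exact unique_nbr G hv hadj hac
    · subst ha; left; exact unique_nbr G hu hadj.symm hac
  have reach : ∀ (a b : Fin n) (_ : G.Walk a b), a ∈ ({v, u} : Set (Fin n)) →
      b ∈ ({v, u} : Set (Fin n)) := by
    intro a b p
    induction p with
    | nil => exact id
    | cons h q ih => exact fun ha => ih (closed _ _ h ha)
  obtain ⟨p⟩ := hG.preconnected v w
  rcases reach v w p (by left; rfl) with h | h
  · exact hw (h ▸ hv)
  · exact hw (h ▸ hu)

lemma three_le_n (hG : G.Connected)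
    (hT : (univ.filter (fun v => G.degree v = 1)).Nonempty)
    (hTp : univ.filter (fun v => G.degree v = 1) ≠ univ) : 3 ≤ n := by
  obtain ⟨v, hv⟩ := hT
  rw [Finset.mem_filter] at hv
  obtain ⟨u, hu⟩ : ∃ u, G.Adj v u := by
    rw [← SimpleGraph.degree_pos_iff_exists_adj]; omega
  have hnu : G.degree u ≠ 1 := no_pendant_adj G hG hTp hv.2 hu
  have h1 : 1 ≤ G.degree u := by
    rw [Nat.one_le_iff_ne_zero]
    intro h0
    have hmem : v ∈ G.neighborFinset u := (G.mem_neighborFinset u v).mpr hu.symm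
    rw [SimpleGraph.degree, Finset.card_eq_zero] at h0
    rw [h0] at hmem
    exact Finset.notMem_empty v hmem
  have := G.degree_lt_card_verts u
  simp only [Fintype.card_fin] at this
  omega

end aux

/-- The number of edges of `G` with one endpoint in `X` and the other in `Xᶜ`
(each such edge corresponds to exactly one ordered pair in `X ×ˢ Xᶜ`). -/
def crossEdgeCard {n : ℕ} (G : SimpleGraph (Fin n)) [DecidableRel G.Adj]
    (X : Finset (Fin n)) : ℕ :=
  ((X ×ˢ Xᶜ).filter (fun p => G.Adj p.1 p.2)).card

/-- The edge density `ρ_G(X) = n·|E_X(G)|/(|X|·|Xᶜ|)`. -/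
noncomputable def edgeDensityR {n : ℕ} (G : SimpleGraph (Fin n)) [DecidableRel G.Adj]
    (X : Finset (Fin n)) : ℝ :=
  ((n : ℝ) * (crossEdgeCard G X : ℝ)) / ((X.card : ℝ) * ((Xᶜ : Finset (Fin n)).card : ℝ))

/-- `μ` is the (weakly decreasing) sequence of eigenvalues of the Laplacian matrix of `G`:
it is antitone and the characteristic polynomial of `L(G)` is `∏ i (x - μ i)`. -/
def IsLapEigSeq {n : ℕ} (G : SimpleGraph (Fin n)) [DecidableRel G.Adj]
    (μ : Fin n → ℝ) : Prop :=
  (∀ i j : Fin n, i ≤ j → μ j ≤ μ i) ∧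
    (G.lapMatrix ℝ).charpoly = ∏ i : Fin n, (X - C (μ i))

set_option maxHeartbeats 1000000 in
/-- if the set `T` of pendant vertices of a connected graph `G` is a
nonempty proper subset of `V(G)` of cardinality `n₁`, then `S_L(G) ≥ n₁/(n - n₁)`. -/
theorem laplacianSpread_ge_pendant_ratio
    {n : ℕ} (hn : 2 ≤ n) (G : SimpleGraph (Fin n)) [DecidableRel G.Adj]
    (hG : G.Connected)
    (μ : Fin n → ℝ) (hμ : IsLapEigSeq G μ)
    (n₁ : ℕ)
    (hT : (univ.filter (fun v => G.degree v = 1)).Nonempty)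
    (hTp : univ.filter (fun v => G.degree v = 1) ≠ univ)
    (hn₁ : (univ.filter (fun v => G.degree v = 1)).card = n₁) :
    (n₁ : ℝ) / ((n : ℝ) - (n₁ : ℝ)) ≤ μ ⟨0, by omega⟩ - μ ⟨n - 2, by omega⟩ := by
  classical
  obtain ⟨hanti, hch⟩ := hμ
  have hn3 : 3 ≤ n := three_le_n G hG hT hTp
  have hn₁pos : 1 ≤ n₁ := by rw [← hn₁]; exact Finset.card_pos.mpr hT
  have hn₁lt : n₁ < n := by
    rw [← hn₁]
    have h := Finset.card_lt_card ((Finset.filter_subset _ _).ssubset_of_ne hTp)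
    simpa using h
  set L := G.lapMatrix ℝ with hLdef
  have hPSD : L.PosSemidef := SimpleGraph.posSemidef_lapMatrix ℝ G
  set hL : L.IsHermitian := hPSD.1 with hhL
  set ν : Fin n → ℝ := hL.eigenvalues with hνdef
  -- multiset of eigenvalues
  have hprod : ∏ i, (X - C (μ i)) = ∏ i : Fin n, (X - C (ν i)) := by
    rw [← hch, charpoly_eq_prod_eigs L hL]
  have hms : Multiset.map μ univ.val = Multiset.map ν univ.val := by
    have h1 : ((Multiset.map μ univ.val).map (fun a : ℝ => X - C a)).prod
        = ((Multiset.map ν univ.val).map (fun a : ℝ => X - C a)).prod := by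
      rw [Multiset.map_map, Multiset.map_map]
      exact hprod
    have h2 := congrArg Polynomial.roots h1
    rwa [Polynomial.roots_multiset_prod_X_sub_C, Polynomial.roots_multiset_prod_X_sub_C] at h2
  have hν_nonneg : ∀ i, 0 ≤ ν i := fun i => hPSD.eigenvalues_nonneg i
  have hmemν : ∀ i, ∃ j, ν i = μ j := by
    intro i
    have h : ν i ∈ Multiset.map ν univ.val :=
      Multiset.mem_map_of_mem ν (Finset.mem_val.mpr (Finset.mem_univ i))
    rw [← hms] at h
    obtain ⟨j, _, hj⟩ := Multiset.mem_map.mp h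
    exact ⟨j, hj.symm⟩
  have hmemμ : ∀ j, ∃ i, μ j = ν i := by
    intro j
    have h : μ j ∈ Multiset.map μ univ.val :=
      Multiset.mem_map_of_mem μ (Finset.mem_val.mpr (Finset.mem_univ j))
    rw [hms] at h
    obtain ⟨i, _, hi⟩ := Multiset.mem_map.mp h
    exact ⟨i, hi.symm⟩
  have hμ_nonneg : ∀ j, 0 ≤ μ j := fun j => by
    obtain ⟨i, hi⟩ := hmemμ j; rw [hi]; exact hν_nonneg i
  obtain ⟨i0, hi0⟩ := Finset.card_eq_one.mp (card_zero_eigs G hG hL)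
  have hνi0 : ν i0 = 0 := by
    have h : i0 ∈ univ.filter (fun i => hL.eigenvalues i = 0) := by
      rw [hi0]; exact Finset.mem_singleton_self i0
    exact (Finset.mem_filter.mp h).2
  have hνne : ∀ i, i ≠ i0 → ν i ≠ 0 := by
    intro i hii h0
    have h : i ∈ univ.filter (fun i => hL.eigenvalues i = 0) :=
      Finset.mem_filter.mpr ⟨Finset.mem_univ i, h0⟩
    rw [hi0, Finset.mem_singleton] at h
    exact hii h
  have hlast : μ ⟨n-1, by omega⟩ = 0 := by
    obtain ⟨j, hj⟩ : ∃ j, μ j = 0 := by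
      have h : (0:ℝ) ∈ Multiset.map ν univ.val := by
        rw [← hνi0]
        exact Multiset.mem_map_of_mem ν (Finset.mem_val.mpr (Finset.mem_univ i0))
      rw [← hms] at h
      obtain ⟨j, _, hj⟩ := Multiset.mem_map.mp h
      exact ⟨j, hj⟩
    have h1 : μ ⟨n-1, by omega⟩ ≤ μ j := by
      apply hanti j ⟨n-1, by omega⟩
      rw [Fin.le_def]
      have := j.isLt
      simp only []
      omega
    have h2 := hμ_nonneg ⟨n-1, by omega⟩
    rw [hj] at h1
    linarith
  have hmax : ∀ i, ν i ≤ μ ⟨0, by omega⟩ := by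
    intro i
    obtain ⟨j, hj⟩ := hmemν i
    rw [hj]
    apply hanti ⟨0, by omega⟩ j
    rw [Fin.le_def]
    simp
  have hsec : ∀ i, i ≠ i0 → μ ⟨n-2, by omega⟩ ≤ ν i := by
    intro i hi
    obtain ⟨j, hj⟩ := hmemν i
    rw [hj]
    have hjne : (j : ℕ) ≠ n-1 := by
      intro hcon
      apply hνne i hi
      rw [hj]
      have : j = (⟨n-1, by omega⟩ : Fin n) := Fin.ext hcon
      rw [this, hlast]
    apply hanti j ⟨n-2, by omega⟩
    rw [Fin.le_def]
    have := j.isLt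
    simp only []
    omega
  -- Rayleigh bounds
  have boundA : ∀ x : Fin n → ℝ, x ⬝ᵥ (L *ᵥ x) ≤ μ ⟨0, by omega⟩ * (x ⬝ᵥ x) := by
    intro x
    rw [quadform_eq_sum hL x, ← sum_sq_coords hL x, Finset.mul_sum]
    exact Finset.sum_le_sum fun i _ => mul_le_mul_of_nonneg_right (hmax i) (sq_nonneg _)
  have boundB : ∀ x : Fin n → ℝ, (∑ j, x j) = 0 →
      μ ⟨n-2, by omega⟩ * (x ⬝ᵥ x) ≤ x ⬝ᵥ (L *ᵥ x) := by
    intro x hx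
    have hEig : L *ᵥ ⇑(hL.eigenvectorBasis i0) = 0 := by
      rw [hL.mulVec_eigenvectorBasis i0]
      rw [show hL.eigenvalues i0 = (0:ℝ) from hνi0]
      simp
    have hconst : ∀ a b : Fin n, (hL.eigenvectorBasis i0) a = (hL.eigenvectorBasis i0) b := by
      have h := (G.lapMatrix_mulVec_eq_zero_iff_forall_reachable
        (x := ⇑(hL.eigenvectorBasis i0))).mp (by exact hEig)
      exact fun a b => h a b (hG.preconnected a b)
    rw [quadform_eq_sum hL x, ← sum_sq_coords hL x]
    set c : Fin n → ℝ := star (hL.eigenvectorUnitary : Matrix (Fin n) (Fin n) ℝ) *ᵥ x with hc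
    have hci0 : c i0 = 0 := by
      have h1 : c i0 = ∑ j, (hL.eigenvectorBasis i0) j * x j := by
        simp [hc, Matrix.mulVec, dotProduct, Matrix.star_apply]
      rw [h1]
      calc ∑ j, (hL.eigenvectorBasis i0) j * x j
          = ∑ j, (hL.eigenvectorBasis i0) i0 * x j :=
            Finset.sum_congr rfl fun j _ => by rw [hconst j i0]
        _ = (hL.eigenvectorBasis i0) i0 * ∑ j, x j := by rw [Finset.mul_sum]
        _ = 0 := by rw [hx, mul_zero]
    rw [Finset.mul_sum]
    rw [← Finset.sum_erase_add _ _ (Finset.mem_univ i0),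
        ← Finset.sum_erase_add _ _ (Finset.mem_univ i0)]
    have hz1 : hL.eigenvalues i0 * (c i0)^2 = 0 := by rw [hci0]; ring
    have hz2 : μ ⟨n-2, by omega⟩ * (c i0)^2 = 0 := by rw [hci0]; ring
    rw [hz1, hz2]
    apply add_le_add_left
    apply Finset.sum_le_sum
    intro i hi
    exact mul_le_mul_of_nonneg_right (hsec i (Finset.ne_of_mem_erase hi)) (sq_nonneg _)
  -- quadratic form as edge sum
  have hquad : ∀ x : Fin n → ℝ, x ⬝ᵥ (L *ᵥ x)
      = (∑ i, ∑ j, if G.Adj i j then (x i - x j)^2 else 0)/2 := by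
    intro x
    have h := SimpleGraph.lapMatrix_toLinearMap₂' (R := ℝ) (G := G) x
    rw [Matrix.toLinearMap₂'_apply'] at h
    exact h
  have hnbr : ∀ v : Fin n, G.degree v = 1 → ∃ u, G.Adj v u ∧ G.degree u ≠ 1 := by
    intro v hv
    obtain ⟨u, hu⟩ : ∃ u, G.Adj v u := by
      rw [← SimpleGraph.degree_pos_iff_exists_adj]; omega
    exact ⟨u, hu, no_pendant_adj G hG hTp hv hu⟩
  have hTc : (univ.filter (fun v => ¬ G.degree v = 1)).card = n - n₁ := by
    have h := Finset.card_filter_add_card_filter_not (s := (univ : Finset (Fin n)))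
      (p := fun v => G.degree v = 1)
    simp only [Finset.card_univ, Fintype.card_fin] at h
    omega
  -- test vector 1
  set x1 : Fin n → ℝ := fun v => if G.degree v = 1 then ((n:ℝ) - n₁) else -(n₁:ℝ) with hx1
  have hx1T : ∀ v, G.degree v = 1 → x1 v = (n:ℝ) - n₁ := fun v hv => by simp [hx1, hv]
  have hx1N : ∀ v, G.degree v ≠ 1 → x1 v = -(n₁:ℝ) := fun v hv => by simp [hx1, hv]
  have hdot1 : x1 ⬝ᵥ x1 = (n₁:ℝ) * ((n:ℝ)-n₁)^2 + ((n:ℝ)-(n₁:ℝ)) * (n₁:ℝ)^2 := by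
    rw [dotProduct,
      ← Finset.sum_filter_add_sum_filter_not univ (fun v => G.degree v = 1)]
    have e1 : ∑ v ∈ univ.filter (fun v => G.degree v = 1), x1 v * x1 v
        = (n₁:ℝ) * ((n:ℝ)-n₁)^2 := by
      rw [Finset.sum_congr rfl (fun v hv => by
        rw [hx1T v (Finset.mem_filter.mp hv).2, ← sq])]
      rw [Finset.sum_const, hn₁, nsmul_eq_mul]
    have e2 : ∑ v ∈ univ.filter (fun v => ¬ G.degree v = 1), x1 v * x1 v
        = ((n:ℝ)-(n₁:ℝ)) * (n₁:ℝ)^2 := by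
      rw [Finset.sum_congr rfl (fun v hv => by
        rw [hx1N v (Finset.mem_filter.mp hv).2, neg_mul_neg, ← sq])]
      rw [Finset.sum_const, hTc, nsmul_eq_mul]
      congr 1
      push_cast [Nat.cast_sub hn₁lt.le]
      ring
    rw [e1, e2]
  -- lower bound on the quadratic form of x1
  have hS1 : (n₁:ℝ) * (n:ℝ)^2 ≤ x1 ⬝ᵥ (L *ᵥ x1) := by
    rw [hquad x1, le_div_iff₀ (by norm_num : (0:ℝ) < 2)]
    set F : Fin n → Fin n → ℝ := fun i j => if G.Adj i j then (x1 i - x1 j)^2 else 0 with hF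
    have hF0 : ∀ i j, 0 ≤ F i j := by
      intro i j; simp only [hF]; split <;> positivity
    have hFcross : ∀ i j, G.degree i = 1 → G.Adj i j → F i j = (n:ℝ)^2 := by
      intro i j hdi hadj
      have hdj : G.degree j ≠ 1 := no_pendant_adj G hG hTp hdi hadj
      simp only [hF, if_pos hadj, hx1T i hdi, hx1N j hdj]
      ring
    have hFsym : ∀ i j, F i j = F j i := by
      intro i j
      simp only [hF]
      rw [if_congr (G.adj_comm i j) rfl rfl]
      congr 1
      ring
    have hsplit : ∑ i, ∑ j, F i j
        = ∑ i ∈ univ.filter (fun v => G.degree v = 1), (∑ j, F i j)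
          + ∑ i ∈ univ.filter (fun v => ¬ G.degree v = 1), (∑ j, F i j) :=
      (Finset.sum_filter_add_sum_filter_not univ _ _).symm
    have hpart1 : (n₁:ℝ) * (n:ℝ)^2
        ≤ ∑ i ∈ univ.filter (fun v => G.degree v = 1), (∑ j, F i j) := by
      have h1 : ∀ i ∈ univ.filter (fun v => G.degree v = 1), (n:ℝ)^2 ≤ ∑ j, F i j := by
        intro i hi
        have hdi := (Finset.mem_filter.mp hi).2
        obtain ⟨u, hu, _⟩ := hnbr i hdi
        calc (n:ℝ)^2 = F i u := (hFcross i u hdi hu).symm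
          _ ≤ ∑ j, F i j := Finset.single_le_sum (fun j _ => hF0 i j) (Finset.mem_univ u)
      calc (n₁:ℝ) * (n:ℝ)^2
          = ∑ _i ∈ univ.filter (fun v => G.degree v = 1), (n:ℝ)^2 := by
            rw [Finset.sum_const, hn₁, nsmul_eq_mul]
        _ ≤ _ := Finset.sum_le_sum h1
    have hpart2 : (n₁:ℝ) * (n:ℝ)^2
        ≤ ∑ i ∈ univ.filter (fun v => ¬ G.degree v = 1), (∑ j, F i j) := by
      have hstep : ∑ i ∈ univ.filter (fun v => ¬ G.degree v = 1),
          (∑ j ∈ univ.filter (fun v => G.degree v = 1), F i j)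
          ≤ ∑ i ∈ univ.filter (fun v => ¬ G.degree v = 1), (∑ j, F i j) := by
        apply Finset.sum_le_sum
        intro i _
        exact Finset.sum_le_sum_of_subset_of_nonneg (Finset.subset_univ _)
          (fun j _ _ => hF0 i j)
      refine le_trans ?_ hstep
      rw [Finset.sum_comm]
      have h1 : ∀ j ∈ univ.filter (fun v => G.degree v = 1),
          (n:ℝ)^2 ≤ ∑ i ∈ univ.filter (fun v => ¬ G.degree v = 1), F i j := by
        intro j hj
        have hdj := (Finset.mem_filter.mp hj).2
        obtain ⟨u, hu, hdu⟩ := hnbr j hdj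
        have hmemu : u ∈ univ.filter (fun v => ¬ G.degree v = 1) :=
          Finset.mem_filter.mpr ⟨Finset.mem_univ u, hdu⟩
        calc (n:ℝ)^2 = F u j := by rw [hFsym u j]; exact (hFcross j u hdj hu).symm
          _ ≤ _ := Finset.single_le_sum (fun i _ => hF0 i j) hmemu
      calc (n₁:ℝ) * (n:ℝ)^2
          = ∑ _j ∈ univ.filter (fun v => G.degree v = 1), (n:ℝ)^2 := by
            rw [Finset.sum_const, hn₁, nsmul_eq_mul]
        _ ≤ _ := Finset.sum_le_sum h1
    rw [hsplit]
    linarith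
  -- test vector 2
  obtain ⟨v₀, hv₀mem⟩ := hT
  have hdv₀ : G.degree v₀ = 1 := (Finset.mem_filter.mp hv₀mem).2
  obtain ⟨u₀, hadj₀, hdu₀⟩ := hnbr v₀ hdv₀
  have hne0 : v₀ ≠ u₀ := G.ne_of_adj hadj₀
  set x2 : Fin n → ℝ := fun w => if w = v₀ then ((n:ℝ)-2) else if w = u₀ then 0 else -1 with hx2
  have hx2v : x2 v₀ = (n:ℝ)-2 := by simp [hx2]
  have hx2u : x2 u₀ = 0 := by simp [hx2, Ne.symm hne0]
  have hx2o : ∀ w, w ≠ v₀ → w ≠ u₀ → x2 w = -1 := by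
    intro w h1 h2; simp [hx2, h1, h2]
  have hcast2 : ((n-2:ℕ):ℝ) = (n:ℝ) - 2 := by
    push_cast [Nat.cast_sub (by omega : 2 ≤ n)]; ring
  have hothers : ∀ w ∈ univ \ ({v₀, u₀} : Finset (Fin n)), x2 w = -1 := by
    intro w hw
    rw [Finset.mem_sdiff, Finset.mem_insert, Finset.mem_singleton] at hw
    push_neg at hw
    exact hx2o w hw.2.1 hw.2.2
  have hcards : (univ \ ({v₀, u₀} : Finset (Fin n))).card = n - 2 := by
    rw [Finset.card_sdiff_of_subset (Finset.subset_univ _), Finset.card_univ, Fintype.card_fin,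
      Finset.card_pair hne0]
  have hsum2 : (∑ w, x2 w) = 0 := by
    rw [← Finset.sum_sdiff (Finset.subset_univ ({v₀, u₀} : Finset (Fin n)))]
    rw [Finset.sum_pair hne0, hx2v, hx2u]
    rw [Finset.sum_congr rfl hothers, Finset.sum_const, hcards, nsmul_eq_mul, hcast2]
    ring
  have hdot2 : x2 ⬝ᵥ x2 = ((n:ℝ)-2)*((n:ℝ)-1) := by
    rw [dotProduct,
      ← Finset.sum_sdiff (Finset.subset_univ ({v₀, u₀} : Finset (Fin n)))]
    rw [Finset.sum_pair hne0, hx2v, hx2u]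
    rw [Finset.sum_congr rfl (fun w hw => by rw [hothers w hw]),
      Finset.sum_const, hcards, nsmul_eq_mul, hcast2]
    ring
  -- upper bound on the quadratic form of x2
  have hS2 : x2 ⬝ᵥ (L *ᵥ x2) ≤ ((n:ℝ)-2)*((n:ℝ)-1) := by
    rw [hquad x2, div_le_iff₀ (by norm_num : (0:ℝ) < 2)]
    set B : Fin n → Fin n → ℝ := fun i j =>
      (if i = v₀ ∧ j = u₀ then ((n:ℝ)-2)^2 else 0)
      + (if j = v₀ ∧ i = u₀ then ((n:ℝ)-2)^2 else 0)
      + (if i = u₀ ∧ ¬ j = v₀ ∧ ¬ j = u₀ then 1 else 0)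
      + (if j = u₀ ∧ ¬ i = v₀ ∧ ¬ i = u₀ then 1 else 0) with hB
    have hite : ∀ (p : Prop) [Decidable p] (a : ℝ), 0 ≤ a → (0:ℝ) ≤ (if p then a else 0) := by
      intro p _ a ha; split
      · exact ha
      · exact le_rfl
    have hBnn : ∀ i j, (0:ℝ) ≤ B i j := by
      intro i j
      exact add_nonneg (add_nonneg (add_nonneg (hite _ _ (sq_nonneg _))
        (hite _ _ (sq_nonneg _))) (hite _ _ zero_le_one)) (hite _ _ zero_le_one)
    have hB1 : ∀ i j, (if i = v₀ ∧ j = u₀ then ((n:ℝ)-2)^2 else 0) ≤ B i j := by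
      intro i j
      have h1 := hite (j = v₀ ∧ i = u₀) (((n:ℝ)-2)^2) (sq_nonneg _)
      have h2 := hite (i = u₀ ∧ ¬ j = v₀ ∧ ¬ j = u₀) (1:ℝ) zero_le_one
      have h3 := hite (j = u₀ ∧ ¬ i = v₀ ∧ ¬ i = u₀) (1:ℝ) zero_le_one
      simp only [hB]
      linarith
    have hB2 : ∀ i j, (if j = v₀ ∧ i = u₀ then ((n:ℝ)-2)^2 else 0) ≤ B i j := by
      intro i j
      have h1 := hite (i = v₀ ∧ j = u₀) (((n:ℝ)-2)^2) (sq_nonneg _)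
      have h2 := hite (i = u₀ ∧ ¬ j = v₀ ∧ ¬ j = u₀) (1:ℝ) zero_le_one
      have h3 := hite (j = u₀ ∧ ¬ i = v₀ ∧ ¬ i = u₀) (1:ℝ) zero_le_one
      simp only [hB]
      linarith
    have hB3 : ∀ i j, (if i = u₀ ∧ ¬ j = v₀ ∧ ¬ j = u₀ then (1:ℝ) else 0) ≤ B i j := by
      intro i j
      have h1 := hite (i = v₀ ∧ j = u₀) (((n:ℝ)-2)^2) (sq_nonneg _)
      have h2 := hite (j = v₀ ∧ i = u₀) (((n:ℝ)-2)^2) (sq_nonneg _)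
      have h3 := hite (j = u₀ ∧ ¬ i = v₀ ∧ ¬ i = u₀) (1:ℝ) zero_le_one
      simp only [hB]
      linarith
    have hB4 : ∀ i j, (if j = u₀ ∧ ¬ i = v₀ ∧ ¬ i = u₀ then (1:ℝ) else 0) ≤ B i j := by
      intro i j
      have h1 := hite (i = v₀ ∧ j = u₀) (((n:ℝ)-2)^2) (sq_nonneg _)
      have h2 := hite (j = v₀ ∧ i = u₀) (((n:ℝ)-2)^2) (sq_nonneg _)
      have h3 := hite (i = u₀ ∧ ¬ j = v₀ ∧ ¬ j = u₀) (1:ℝ) zero_le_one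
      simp only [hB]
      linarith
    have hpw : ∀ i j, (if G.Adj i j then (x2 i - x2 j)^2 else 0) ≤ B i j := by
      intro i j
      by_cases hadj : G.Adj i j
      · have hij : i ≠ j := G.ne_of_adj hadj
        rw [if_pos hadj]
        by_cases hiv : i = v₀
        · rw [hiv] at hadj hij ⊢
          have hju : j = u₀ := unique_nbr G hdv₀ hadj₀ hadj
          rw [hju]
          have h := hB1 v₀ u₀
          rw [if_pos ⟨rfl, rfl⟩] at h
          have hval : (x2 v₀ - x2 u₀)^2 = ((n:ℝ)-2)^2 := by rw [hx2v, hx2u]; ring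
          linarith
        · by_cases hjv : j = v₀
          · rw [hjv] at hadj hij ⊢
            have hiu : i = u₀ := unique_nbr G hdv₀ hadj₀ hadj.symm
            rw [hiu]
            have h := hB2 u₀ v₀
            rw [if_pos ⟨rfl, rfl⟩] at h
            have hval : (x2 u₀ - x2 v₀)^2 = ((n:ℝ)-2)^2 := by rw [hx2v, hx2u]; ring
            linarith
          · by_cases hiu : i = u₀
            · have hju : ¬ j = u₀ := fun h => hij (hiu.trans h.symm)
              have h := hB3 i j
              rw [if_pos ⟨hiu, hjv, hju⟩] at h
              have hval : (x2 i - x2 j)^2 = 1 := by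
                rw [hiu, hx2u, hx2o j hjv hju]; ring
              linarith
            · by_cases hju : j = u₀
              · have h := hB4 i j
                rw [if_pos ⟨hju, hiv, hiu⟩] at h
                have hval : (x2 i - x2 j)^2 = 1 := by
                  rw [hju, hx2u, hx2o i hiv hiu]; ring
                linarith
              · have hval : (x2 i - x2 j)^2 = 0 := by
                  rw [hx2o i hiv hiu, hx2o j hjv hju]; ring
                rw [hval]
                exact hBnn i j
      · rw [if_neg hadj]; exact hBnn i j
    have hfilter : (univ.filter (fun j : Fin n => ¬ j = v₀ ∧ ¬ j = u₀))
        = univ \ ({v₀, u₀} : Finset (Fin n)) := by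
      ext w
      simp [Finset.mem_sdiff, not_or]
    have hKsum : ∑ j, (if ¬ j = v₀ ∧ ¬ j = u₀ then (1:ℝ) else 0) = (n:ℝ) - 2 := by
      rw [Finset.sum_boole, hfilter, hcards, hcast2]
    have s1 : ∑ i, ∑ j, (if i = v₀ ∧ j = u₀ then ((n:ℝ)-2)^2 else 0) = ((n:ℝ)-2)^2 := by
      simp [ite_and, Finset.sum_ite_eq, Finset.sum_ite_eq']
    have s2 : ∑ i, ∑ j, (if j = v₀ ∧ i = u₀ then ((n:ℝ)-2)^2 else 0) = ((n:ℝ)-2)^2 := by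
      simp [ite_and, Finset.sum_ite_eq, Finset.sum_ite_eq']
    have s3 : ∑ i, ∑ j, (if i = u₀ ∧ ¬ j = v₀ ∧ ¬ j = u₀ then (1:ℝ) else 0) = (n:ℝ)-2 := by
      have inner : ∀ i : Fin n, ∑ j, (if i = u₀ ∧ ¬ j = v₀ ∧ ¬ j = u₀ then (1:ℝ) else 0)
          = if i = u₀ then (n:ℝ)-2 else 0 := by
        intro i
        by_cases h : i = u₀
        · simp only [h, true_and, if_pos rfl]
          exact hKsum
        · simp [h]
      rw [Finset.sum_congr rfl (fun i _ => inner i)]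
      simp [Finset.sum_ite_eq, Finset.sum_ite_eq']
    have s4 : ∑ i, ∑ j, (if j = u₀ ∧ ¬ i = v₀ ∧ ¬ i = u₀ then (1:ℝ) else 0) = (n:ℝ)-2 := by
      have inner : ∀ i : Fin n, ∑ j, (if j = u₀ ∧ ¬ i = v₀ ∧ ¬ i = u₀ then (1:ℝ) else 0)
          = if ¬ i = v₀ ∧ ¬ i = u₀ then (1:ℝ) else 0 := by
        intro i
        by_cases h : ¬ i = v₀ ∧ ¬ i = u₀
        · simp [h, Finset.sum_ite_eq, Finset.sum_ite_eq']
        · simp [h]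
      rw [Finset.sum_congr rfl (fun i _ => inner i)]
      exact hKsum
    have hsumB : ∑ i, ∑ j, B i j = 2*((n:ℝ)-2)^2 + 2*((n:ℝ)-2) := by
      simp only [hB, Finset.sum_add_distrib]
      rw [s1, s2, s3, s4]
      ring
    calc ∑ i, ∑ j, (if G.Adj i j then (x2 i - x2 j)^2 else 0)
        ≤ ∑ i, ∑ j, B i j :=
          Finset.sum_le_sum fun i _ => Finset.sum_le_sum fun j _ => hpw i j
      _ = 2*((n:ℝ)-2)^2 + 2*((n:ℝ)-2) := hsumB
      _ = ((n:ℝ)-2)*((n:ℝ)-1)*2 := by ring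
  -- final numerics
  have hμ0 : (n:ℝ) ≤ μ ⟨0, by omega⟩ * ((n:ℝ)-(n₁:ℝ)) := by
    have h1 := le_trans hS1 (boundA x1)
    rw [hdot1] at h1
    have hn₁R : (1:ℝ) ≤ (n₁:ℝ) := by exact_mod_cast hn₁pos
    have hnR : (n₁:ℝ) + 1 ≤ (n:ℝ) := by exact_mod_cast hn₁lt
    have hpos' : (0:ℝ) < (n₁:ℝ) * (n:ℝ) := by
      apply mul_pos <;> linarith
    have e : (n₁:ℝ)*((n:ℝ)-(n₁:ℝ))^2 + ((n:ℝ)-(n₁:ℝ))*(n₁:ℝ)^2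
        = ((n₁:ℝ)*(n:ℝ))*((n:ℝ)-(n₁:ℝ)) := by ring
    rw [e] at h1
    have h3 : ((n₁:ℝ)*(n:ℝ)) * (n:ℝ) ≤ ((n₁:ℝ)*(n:ℝ)) * (μ ⟨0, by omega⟩ * ((n:ℝ)-(n₁:ℝ))) := by
      linarith [h1]
    exact le_of_mul_le_mul_left h3 hpos'
  have hμ2 : μ ⟨n-2, by omega⟩ ≤ 1 := by
    have h1 := le_trans (boundB x2 hsum2) hS2
    rw [hdot2] at h1
    have hnR : (3:ℝ) ≤ (n:ℝ) := by exact_mod_cast hn3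
    have hP : (0:ℝ) < ((n:ℝ)-2)*((n:ℝ)-1) := by
      apply mul_pos <;> linarith
    have h2 : μ ⟨n-2, by omega⟩ * (((n:ℝ)-2)*((n:ℝ)-1)) ≤ 1 * (((n:ℝ)-2)*((n:ℝ)-1)) := by
      linarith
    exact le_of_mul_le_mul_right h2 hP
  have hpos : (0:ℝ) < (n:ℝ) - (n₁:ℝ) := by
    have : (n₁:ℝ) + 1 ≤ (n:ℝ) := by exact_mod_cast hn₁lt
    linarith
  rw [div_le_iff₀ hpos]
  have h4 : μ ⟨n-2, by omega⟩ * ((n:ℝ)-(n₁:ℝ)) ≤ 1 * ((n:ℝ)-(n₁:ℝ)) :=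
    mul_le_mul_of_nonneg_right hμ2 hpos.le
  nlinarith [hμ0, h4]
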